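/- Let G be a simple graph with perfect elimination ordering (v_1,…,v_ℓ). For k ∈ {1,…,ℓ} let C_{≥k} := {k} ∪ {i : there exist indices k < j_1 < j_2 < ⋯ < j_n < i (n ≥ 0) such that v_k v_{j_1} ⋯ v_{j_n} v_i is a path in G}. Suppose {v_i, v_j} is an edge of G with i < j, and suppose that for some k one has j ∈ C_{≥k} and i ∉ C_{≥k}. Then i < k and {v_i, v_k} is an edge of G (i.e., i ∈ E_{<k}). -/

import Mathlib

open Finset

/-- `ascReach G v k i` says that there is a path `v_k v_{j₁} ⋯ v_{j_n} v_i` in `G`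
whose index sequence `k < j₁ < ⋯ < j_n < i` is strictly increasing. -/
def ascReach {ℓ : ℕ} (G : SimpleGraph (Fin ℓ)) (v : Equiv.Perm (Fin ℓ))
    (k i : Fin ℓ) : Prop :=
  ∃ n : ℕ, ∃ f : Fin (n + 2) → Fin ℓ,
    StrictMono f ∧ f 0 = k ∧ f (Fin.last (n + 1)) = i ∧
      ∀ m : Fin (n + 1), G.Adj (v (f m.castSucc)) (v (f m.succ))

lemma ext_reach {ℓ : ℕ} (G : SimpleGraph (Fin ℓ)) (v : Equiv.Perm (Fin ℓ))
    {k j i : Fin ℓ} (hj : j = k ∨ ascReach G v k j) (hji : j < i)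
    (hadj : G.Adj (v j) (v i)) : ascReach G v k i := by
  rcases hj with rfl | ⟨n, f, hmono, h0, hlast, hadjs⟩
  · refine ⟨0, fun m => if m.val = 0 then j else i, ?_, by simp, by simp [Fin.last], ?_⟩
    · intro a b hab
      fin_cases a <;> fin_cases b <;> simp_all
    · intro m
      fin_cases m
      simpa using hadj
  · refine ⟨n + 1, Fin.snoc f i, ?_, ?_, ?_, ?_⟩
    · intro a b hab
      by_cases hb : b = Fin.last (n + 2)
      · subst hb
        obtain ⟨a', rfl⟩ := Fin.exists_castSucc_eq.mpr (Fin.ne_last_of_lt hab)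
        rw [Fin.snoc_castSucc, Fin.snoc_last]
        calc f a' ≤ f (Fin.last (n + 1)) := hmono.monotone (Fin.le_last a')
          _ = j := hlast
          _ < i := hji
      · obtain ⟨b', rfl⟩ := Fin.exists_castSucc_eq.mpr hb
        obtain ⟨a', rfl⟩ := Fin.exists_castSucc_eq.mpr
          (Fin.ne_last_of_lt (lt_trans hab (Fin.castSucc_lt_last b')))
        rw [Fin.snoc_castSucc, Fin.snoc_castSucc]
        exact hmono (by exact_mod_cast hab)
    · have : (0 : Fin (n + 3)) = Fin.castSucc 0 := by simp
      rw [this, Fin.snoc_castSucc, h0]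
    · exact Fin.snoc_last _ _
    · intro m
      by_cases hm : m = Fin.last (n + 1)
      · subst hm
        rw [Fin.succ_last, Fin.snoc_last, Fin.snoc_castSucc, hlast]
        exact hadj
      · obtain ⟨m', rfl⟩ := Fin.exists_castSucc_eq.mpr hm
        rw [Fin.succ_castSucc, Fin.snoc_castSucc, Fin.snoc_castSucc]
        exact hadjs m'

lemma peel {ℓ : ℕ} (G : SimpleGraph (Fin ℓ)) (v : Equiv.Perm (Fin ℓ))
    {k j : Fin ℓ} (h : ascReach G v k j) :
    ∃ j', j' < j ∧ G.Adj (v j') (v j) ∧ (j' = k ∨ ascReach G v k j') := by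
  obtain ⟨n, f, hmono, h0, hlast, hadjs⟩ := h
  refine ⟨f ((Fin.last n).castSucc), ?_, ?_, ?_⟩
  · rw [← hlast]; exact hmono (Fin.castSucc_lt_last _)
  · have := hadjs (Fin.last n)
    rwa [Fin.succ_last, hlast] at this
  · cases n with
    | zero => left; simpa using h0
    | succ m =>
      right
      refine ⟨m, f ∘ Fin.castSucc, ?_, ?_, rfl, ?_⟩
      · exact hmono.comp Fin.strictMono_castSucc
      · simpa using h0
      · intro m'
        have := hadjs m'.castSucc
        simp only [Function.comp_apply, Fin.succ_castSucc] at *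
        exact this

theorem stmt16 (ℓ : ℕ) (G : SimpleGraph (Fin ℓ)) (v : Equiv.Perm (Fin ℓ))
    (hPEO : ∀ k j l : Fin ℓ, j < k → l < k → j ≠ l →
      G.Adj (v j) (v k) → G.Adj (v l) (v k) → G.Adj (v j) (v l))
    (i j k : Fin ℓ) (hij : G.Adj (v i) (v j)) (hlt : i < j)
    (hjC : j = k ∨ ascReach G v k j)
    (hiC : ¬(i = k ∨ ascReach G v k i)) :
    i < k ∧ G.Adj (v i) (v k) := by
  have main : ∀ N : ℕ, ∀ j : Fin ℓ, j.val ≤ N → G.Adj (v i) (v j) → i < j →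
      (j = k ∨ ascReach G v k j) → i < k ∧ G.Adj (v i) (v k) := by
    intro N
    induction N with
    | zero =>
      intro j hjN hadj hltij hjC
      exact absurd ((show i.val < j.val from hltij)) (by omega)
    | succ N ih =>
      intro j hjN hadj hltij hjC
      rcases hjC with rfl | hreach
      · exact ⟨hltij, hadj⟩
      · obtain ⟨j', hj'lt, hj'adj, hj'C⟩ := peel G v hreach
        have hne : i ≠ j' := by
          rintro rfl; exact hiC hj'C
        have hadj' : G.Adj (v i) (v j') := hPEO j i j' hltij hj'lt hne hadj hj'adj
        rcases lt_trichotomy i j' with h | h | h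
        · exact ih j' (by have : j'.val < j.val := hj'lt; omega) hadj' h hj'C
        · exact absurd h hne
        · exact absurd (Or.inr (ext_reach G v hj'C h (hadj'.symm))) hiC
  exact main j.val j le_rfl hij hlt hjC
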